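/- arXiv:math/0604395 — 2 statements merged into one kernel-verified Lean document; each statement's English description precedes it below -/
import Mathlib

section
/- Let Z be a Parisian walk and set φ_t := φ(Z_t), ψ_t := ψ(Z_t). Define Z′_t := Σ_{s=0}^{t−1} [ φ_s·(Z_{s+1} − Z_s) + ψ_s·(conj(Z_{s+1}) − conj(Z_s)) ] (with Z′_0 = 0). Then Z′ is a Parisian walk: it is an adapted, integrable martingale with Z′_0 ∈ ℤ[ζ] and Z′_{t+1} − Z′_t ∈ {1, ζ, ζ²} almost surely for every t. -/
open MeasureTheory Complex
open scoped Classical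

noncomputable section

namespace Parisian

/-- The primitive cube root of unity `ζ = (−1 + √3·i)/2`. -/
def zeta : ℂ := (-1 + Real.sqrt 3 * Complex.I) / 2

/-- The lattice `ℤ[ζ] = {a + bζ : a, b ∈ ℤ}` as a subset of `ℂ`. -/
def Zlat : Set ℂ := {z | ∃ a b : ℤ, z = (a : ℂ) + (b : ℂ) * zeta}

/-- The set of admissible steps `{1, ζ, ζ²}`. -/
def steps : Set ℂ := {1, zeta, zeta ^ 2}

/-- The set `P = {0, 1, 1 + ζ}`. -/
def Pset : Set ℂ := {0, 1, 1 + zeta}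

/-- Graph distance from the set `P` in `ℤ[ζ]`: the least `n` such that
`z = p + w₁ + ⋯ + w_n` with `p ∈ P` and each `wᵢ ∈ {1, ζ, ζ²}`. -/
def gdist (z : ℂ) : ℕ :=
  sInf {n : ℕ | ∃ p ∈ Pset, ∃ w : Fin n → ℂ, (∀ i, w i ∈ steps) ∧ z = p + ∑ i, w i}

def A1 : Set ℂ := {z | ∃ k1 k2 : ℤ, z = (k1 : ℂ) + (k2 : ℂ) * zeta ^ 2 ∧ 1 < k2 + 1 ∧ k2 + 1 < k1}
def A2 : Set ℂ := {z | ∃ k1 k2 : ℤ, z = -(k1 : ℂ) * zeta - (k2 : ℂ) ∧ 0 ≤ k2 ∧ k2 < k1}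
def A3 : Set ℂ := {z | ∃ k1 k2 : ℤ, z = -(k1 : ℂ) - (k2 : ℂ) * zeta ∧ 0 < k2 ∧ k2 < k1}
def A4 : Set ℂ := {z | ∃ k1 k2 : ℤ, z = (k1 : ℂ) * zeta + (k2 : ℂ) * zeta ^ 2 ∧ 0 ≤ k2 ∧ k2 < k1}
def A5 : Set ℂ := {z | ∃ k1 k2 : ℤ, z = -(k1 : ℂ) * zeta ^ 2 - (k2 : ℂ) ∧ 1 < k2 + 1 ∧ k2 + 1 < k1}
def A6 : Set ℂ := {z | ∃ k1 k2 : ℤ, z = (k1 : ℂ) + (k2 : ℂ) * zeta ∧ 0 < k2 ∧ k2 < k1}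

def B1 : Set ℂ := {z | ∃ n : ℤ, z = (n : ℂ) ∧ 2 ≤ n}
def B2 : Set ℂ := {z | ∃ n : ℤ, z = (n : ℂ) * zeta - zeta ^ 2 ∧ 1 ≤ n}
def B3 : Set ℂ := {z | ∃ n : ℤ, z = (n : ℂ) * zeta ^ 2 ∧ 1 ≤ n}
def B4 : Set ℂ := {z | ∃ n : ℤ, z = (n : ℂ) ∧ n ≤ -1}
def B5 : Set ℂ := {z | ∃ n : ℤ, z = 1 + (n : ℂ) * zeta ∧ n ≤ -1}
def B6 : Set ℂ := {z | ∃ n : ℤ, z = (n : ℂ) * zeta ^ 2 ∧ n ≤ -2}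

/-- The closure `Ā₁ = A₁ ∪ B₁ ∪ B₅ ∪ {1}`. -/
def Abar1 : Set ℂ := A1 ∪ B1 ∪ B5 ∪ {1}
/-- The closure `Ā₃ = A₃ ∪ B₃ ∪ B₄ ∪ {0}`. -/
def Abar3 : Set ℂ := A3 ∪ B3 ∪ B4 ∪ {0}
/-- The closure `Ā₅ = A₅ ∪ B₂ ∪ B₆ ∪ {1+ζ}`. -/
def Abar5 : Set ℂ := A5 ∪ B2 ∪ B6 ∪ {1 + zeta}

/-- `φ(z) = 1_{Ā₁}(z) + ζ·1_{Ā₃}(z) + ζ²·1_{Ā₅}(z)`. -/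
def phi (z : ℂ) : ℂ :=
  Abar1.indicator 1 z + zeta * Abar3.indicator 1 z + zeta ^ 2 * Abar5.indicator 1 z

/-- `ψ(z) = 1_{A₆}(z) + ζ·1_{A₄}(z) + ζ²·1_{A₂}(z)`. -/
def psi (z : ℂ) : ℂ :=
  A6.indicator 1 z + zeta * A4.indicator 1 z + zeta ^ 2 * A2.indicator 1 z

variable {Ω : Type*} {mΩ : MeasurableSpace Ω}

/-- A Parisian walk: an adapted integrable martingale starting in `ℤ[ζ]` a.s.,
with increments in `{1, ζ, ζ²}` a.s. -/
def IsParisian (μ : Measure Ω) (ℱ : Filtration ℕ mΩ) (Z : ℕ → Ω → ℂ) : Prop :=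
  Martingale Z ℱ μ ∧ (∀ᵐ ω ∂μ, Z 0 ω ∈ Zlat) ∧
    ∀ t : ℕ, ∀ᵐ ω ∂μ, Z (t + 1) ω - Z t ω ∈ steps

/-- The local time of a walk: the number of exits from `Ā₁`, `Ā₃`, `Ā₅` before time `t`. -/
def localTime (Z : ℕ → Ω → ℂ) (t : ℕ) (ω : Ω) : ℕ :=
  ∑ u ∈ Finset.range t,
    ((if Z u ω ∈ Abar1 ∧ Z (u + 1) ω ∉ Abar1 then 1 else 0) +
     (if Z u ω ∈ Abar3 ∧ Z (u + 1) ω ∉ Abar3 then 1 else 0) +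
     (if Z u ω ∈ Abar5 ∧ Z (u + 1) ω ∉ Abar5 then 1 else 0))

/-- `ΔZ_S = ∏_{i : sᵢ = ζ} ΔZᵢ · ∏_{i : sᵢ = ζ²} conj(ΔZᵢ)` where `ΔZᵢ = Zᵢ − Z_{i−1}`,
for a tuple `S : Fin t → ℂ` (with entries in `{1, ζ, ζ²}`). -/
def deltaZS (Z : ℕ → Ω → ℂ) (t : ℕ) (S : Fin t → ℂ) (ω : Ω) : ℂ :=
  ∏ i : Fin t,
    (if S i = zeta then Z ((i : ℕ) + 1) ω - Z (i : ℕ) ω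
     else if S i = zeta ^ 2 then starRingEnd ℂ (Z ((i : ℕ) + 1) ω - Z (i : ℕ) ω)
     else 1)

end Parisian

namespace Parisian

lemma sqrt3_mul_self : (Real.sqrt 3 : ℂ) * (Real.sqrt 3 : ℂ) = 3 := by
  norm_cast
  exact_mod_cast Real.mul_self_sqrt (by norm_num)

lemma zeta_sq : zeta ^ 2 = -1 - zeta := by
  unfold zeta
  field_simp
  ring_nf
  rw [Complex.I_sq]
  rw [sq, sqrt3_mul_self]
  ring

lemma zeta_cube : zeta ^ 3 = 1 := by
  have h := zeta_sq
  calc zeta ^ 3 = zeta ^ 2 * zeta := by ring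
  _ = (-1 - zeta) * zeta := by rw [h]
  _ = -zeta - zeta ^ 2 := by ring
  _ = 1 := by rw [h]; ring

lemma zeta_im_pos : 0 < zeta.im := by
  have h : zeta.im = Real.sqrt 3 / 2 := by
    simp [zeta, Complex.div_im, Complex.add_im, Complex.mul_im]
  rw [h]
  have := Real.sqrt_pos.mpr (by norm_num : (0:ℝ) < 3)
  linarith

lemma coords {a b a' b' : ℤ} (h : (a:ℂ) + (b:ℂ) * zeta = (a':ℂ) + (b':ℂ) * zeta) :
    a = a' ∧ b = b' := by
  have him : (b:ℝ) * zeta.im = (b':ℝ) * zeta.im := by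
    have := congrArg Complex.im h
    simpa using this
  have hb : (b:ℝ) = (b':ℝ) := mul_right_cancel₀ (ne_of_gt zeta_im_pos) him
  have hb' : b = b' := by exact_mod_cast hb
  subst hb'
  have hre := congrArg Complex.re h
  simp only [Complex.add_re, Complex.intCast_re, Complex.mul_re] at hre
  have : (a:ℝ) = a' := by linarith
  exact ⟨by exact_mod_cast this, rfl⟩

lemma mem_Abar1_iff (a b : ℤ) : (a:ℂ) + (b:ℂ) * zeta ∈ Abar1 ↔ 1 ≤ a ∧ b ≤ 0 := by
  constructor
  · rintro (((⟨k1, k2, hz, h1, h2⟩ | ⟨n, hz, hn⟩) | ⟨n, hz, hn⟩) | hz)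
    · rw [zeta_sq] at hz
      have h' : (a:ℂ) + (b:ℂ) * zeta = ((k1 - k2 : ℤ):ℂ) + ((-k2 : ℤ):ℂ) * zeta := by
        push_cast; linear_combination hz
      obtain ⟨e1, e2⟩ := coords h'
      omega
    · have h' : (a:ℂ) + (b:ℂ) * zeta = ((n : ℤ):ℂ) + ((0 : ℤ):ℂ) * zeta := by
        push_cast; linear_combination hz
      obtain ⟨e1, e2⟩ := coords h'
      omega
    · have h' : (a:ℂ) + (b:ℂ) * zeta = ((1 : ℤ):ℂ) + ((n : ℤ):ℂ) * zeta := by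
        push_cast; linear_combination hz
      obtain ⟨e1, e2⟩ := coords h'
      omega
    · have hz1 : (a:ℂ) + (b:ℂ) * zeta = 1 := hz
      have h' : (a:ℂ) + (b:ℂ) * zeta = ((1 : ℤ):ℂ) + ((0 : ℤ):ℂ) * zeta := by
        push_cast; linear_combination hz1
      obtain ⟨e1, e2⟩ := coords h'
      omega
  · rintro ⟨h1, h2⟩
    rcases eq_or_lt_of_le h2 with hb0 | hb1
    · rcases eq_or_lt_of_le h1 with ha1 | ha2
      · right; show _ = (1:ℂ); rw [← ha1, hb0]; push_cast; ring
      · left; left; right; exact ⟨a, by rw [hb0]; push_cast; ring, by omega⟩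
    · rcases eq_or_lt_of_le h1 with ha1 | ha2
      · left; right; exact ⟨b, by rw [← ha1]; push_cast; ring, by omega⟩
      · left; left; left
        exact ⟨a - b, -b, by rw [zeta_sq]; push_cast; ring, by omega, by omega⟩

lemma mem_Abar3_iff (a b : ℤ) : (a:ℂ) + (b:ℂ) * zeta ∈ Abar3 ↔ a ≤ b ∧ b ≤ 0 := by
  constructor
  · rintro (((⟨k1, k2, hz, h1, h2⟩ | ⟨n, hz, hn⟩) | ⟨n, hz, hn⟩) | hz)
    · have h' : (a:ℂ) + (b:ℂ) * zeta = ((-k1 : ℤ):ℂ) + ((-k2 : ℤ):ℂ) * zeta := by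
        push_cast; linear_combination hz
      obtain ⟨e1, e2⟩ := coords h'
      omega
    · rw [zeta_sq] at hz
      have h' : (a:ℂ) + (b:ℂ) * zeta = ((-n : ℤ):ℂ) + ((-n : ℤ):ℂ) * zeta := by
        push_cast; linear_combination hz
      obtain ⟨e1, e2⟩ := coords h'
      omega
    · have h' : (a:ℂ) + (b:ℂ) * zeta = ((n : ℤ):ℂ) + ((0 : ℤ):ℂ) * zeta := by
        push_cast; linear_combination hz
      obtain ⟨e1, e2⟩ := coords h'
      omega
    · have hz1 : (a:ℂ) + (b:ℂ) * zeta = 0 := hz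
      have h' : (a:ℂ) + (b:ℂ) * zeta = ((0 : ℤ):ℂ) + ((0 : ℤ):ℂ) * zeta := by
        push_cast; linear_combination hz1
      obtain ⟨e1, e2⟩ := coords h'
      omega
  · rintro ⟨h1, h2⟩
    rcases eq_or_lt_of_le h2 with hb0 | hb1
    · rcases eq_or_lt_of_le h1 with hab | hab
      · right; show _ = (0:ℂ); rw [hab, hb0]; push_cast; ring
      · left; right; exact ⟨a, by rw [hb0]; push_cast; ring, by omega⟩
    · rcases eq_or_lt_of_le h1 with hab | hab
      · left; left; right
        exact ⟨-a, by rw [zeta_sq, hab]; push_cast; ring, by omega⟩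
      · left; left; left
        exact ⟨-a, -b, by push_cast; ring, by omega, by omega⟩

lemma mem_Abar5_iff (a b : ℤ) : (a:ℂ) + (b:ℂ) * zeta ∈ Abar5 ↔ 1 ≤ a ∧ a ≤ b := by
  constructor
  · rintro (((⟨k1, k2, hz, h1, h2⟩ | ⟨n, hz, hn⟩) | ⟨n, hz, hn⟩) | hz)
    · rw [zeta_sq] at hz
      have h' : (a:ℂ) + (b:ℂ) * zeta = ((k1 - k2 : ℤ):ℂ) + ((k1 : ℤ):ℂ) * zeta := by
        push_cast; linear_combination hz
      obtain ⟨e1, e2⟩ := coords h'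
      omega
    · rw [zeta_sq] at hz
      have h' : (a:ℂ) + (b:ℂ) * zeta = ((1 : ℤ):ℂ) + ((n + 1 : ℤ):ℂ) * zeta := by
        push_cast; linear_combination hz
      obtain ⟨e1, e2⟩ := coords h'
      omega
    · rw [zeta_sq] at hz
      have h' : (a:ℂ) + (b:ℂ) * zeta = ((-n : ℤ):ℂ) + ((-n : ℤ):ℂ) * zeta := by
        push_cast; linear_combination hz
      obtain ⟨e1, e2⟩ := coords h'
      omega
    · have hz1 : (a:ℂ) + (b:ℂ) * zeta = 1 + zeta := hz
      have h' : (a:ℂ) + (b:ℂ) * zeta = ((1 : ℤ):ℂ) + ((1 : ℤ):ℂ) * zeta := by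
        push_cast; linear_combination hz1
      obtain ⟨e1, e2⟩ := coords h'
      omega
  · rintro ⟨h1, h2⟩
    rcases eq_or_lt_of_le h1 with ha1 | ha2
    · rcases eq_or_lt_of_le h2 with hab | hab
      · right; show _ = 1 + zeta; rw [← ha1, ← hab, ← ha1]; push_cast; ring
      · left; left; right
        exact ⟨b - 1, by rw [zeta_sq, ← ha1]; push_cast; ring, by omega⟩
    · rcases eq_or_lt_of_le h2 with hab | hab
      · left; right; exact ⟨-a, by rw [zeta_sq, hab]; push_cast; ring, by omega⟩
      · left; left; left
        exact ⟨b, b - a, by rw [zeta_sq]; push_cast; ring, by omega, by omega⟩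

lemma mem_A6_iff (a b : ℤ) : (a:ℂ) + (b:ℂ) * zeta ∈ A6 ↔ 1 ≤ b ∧ b < a := by
  constructor
  · rintro ⟨k1, k2, hz, h1, h2⟩
    have h' : (a:ℂ) + (b:ℂ) * zeta = ((k1 : ℤ):ℂ) + ((k2 : ℤ):ℂ) * zeta := by
      push_cast; linear_combination hz
    obtain ⟨e1, e2⟩ := coords h'
    omega
  · rintro ⟨h1, h2⟩
    exact ⟨a, b, by push_cast; ring, by omega, by omega⟩

lemma mem_A4_iff (a b : ℤ) : (a:ℂ) + (b:ℂ) * zeta ∈ A4 ↔ a ≤ 0 ∧ 1 ≤ b := by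
  constructor
  · rintro ⟨k1, k2, hz, h1, h2⟩
    rw [zeta_sq] at hz
    have h' : (a:ℂ) + (b:ℂ) * zeta = ((-k2 : ℤ):ℂ) + ((k1 - k2 : ℤ):ℂ) * zeta := by
      push_cast; linear_combination hz
    obtain ⟨e1, e2⟩ := coords h'
    omega
  · rintro ⟨h1, h2⟩
    exact ⟨b - a, -a, by rw [zeta_sq]; push_cast; ring, by omega, by omega⟩

lemma mem_A2_iff (a b : ℤ) : (a:ℂ) + (b:ℂ) * zeta ∈ A2 ↔ b < a ∧ a ≤ 0 := by
  constructor
  · rintro ⟨k1, k2, hz, h1, h2⟩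
    have h' : (a:ℂ) + (b:ℂ) * zeta = ((-k2 : ℤ):ℂ) + ((-k1 : ℤ):ℂ) * zeta := by
      push_cast; linear_combination hz
    obtain ⟨e1, e2⟩ := coords h'
    omega
  · rintro ⟨h1, h2⟩
    exact ⟨-b, -a, by push_cast; ring, by omega, by omega⟩

lemma conj_zeta : (starRingEnd ℂ) zeta = zeta ^ 2 := by
  rw [zeta_sq]
  unfold zeta
  rw [map_div₀, map_add, map_neg, map_one, map_mul, Complex.conj_I]
  rw [Complex.conj_ofReal, map_ofNat]
  field_simp
  ring

lemma conj_zeta_sq : (starRingEnd ℂ) (zeta ^ 2) = zeta := by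
  rw [map_pow, conj_zeta]
  calc (zeta ^ 2) ^ 2 = zeta ^ 3 * zeta := by ring
  _ = zeta := by rw [zeta_cube]; ring

lemma one_mem_steps : (1:ℂ) ∈ steps := Or.inl rfl

lemma zeta_mem_steps : zeta ∈ steps := Or.inr (Or.inl rfl)

lemma zeta_sq_mem_steps : zeta ^ 2 ∈ steps := Or.inr (Or.inr rfl)

lemma zeta_mul_mem {w : ℂ} (hw : w ∈ steps) : zeta * w ∈ steps := by
  rcases hw with rfl | rfl | rfl
  · rw [mul_one]; exact zeta_mem_steps
  · rw [← sq]; exact zeta_sq_mem_steps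
  · have : zeta * zeta ^ 2 = 1 := by rw [← pow_succ']; exact zeta_cube
    rw [this]; exact one_mem_steps

lemma zeta_sq_mul_mem {w : ℂ} (hw : w ∈ steps) : zeta ^ 2 * w ∈ steps := by
  rcases hw with rfl | rfl | rfl
  · rw [mul_one]; exact zeta_sq_mem_steps
  · have : zeta ^ 2 * zeta = 1 := by rw [← pow_succ]; exact zeta_cube
    rw [this]; exact one_mem_steps
  · have : zeta ^ 2 * zeta ^ 2 = zeta := by
      calc zeta ^ 2 * zeta ^ 2 = zeta ^ 3 * zeta := by ring
      _ = zeta := by rw [zeta_cube]; ring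
    rw [this]; exact zeta_mem_steps

lemma conj_mem {w : ℂ} (hw : w ∈ steps) : (starRingEnd ℂ) w ∈ steps := by
  rcases hw with rfl | rfl | rfl
  · rw [map_one]; exact one_mem_steps
  · rw [conj_zeta]; exact zeta_sq_mem_steps
  · rw [conj_zeta_sq]; exact zeta_mem_steps

/-- The key algebraic step: for `z` in the lattice and `w` a step,
`φ(z)·w + ψ(z)·conj(w)` is again a step. -/

lemma phi_psi_step {z w : ℂ} (hz : z ∈ Zlat) (hw : w ∈ steps) :
    phi z * w + psi z * (starRingEnd ℂ) w ∈ steps := by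
  obtain ⟨a, b, rfl⟩ := hz
  rcases le_or_gt b 0 with hb | hb
  · rcases le_or_gt 1 a with ha | ha
    · -- z ∈ Ā₁
      have e1 : (a:ℂ) + (b:ℂ) * zeta ∈ Abar1 := (mem_Abar1_iff a b).2 ⟨ha, hb⟩
      have e3 : (a:ℂ) + (b:ℂ) * zeta ∉ Abar3 := fun h => by
        have := (mem_Abar3_iff a b).1 h; omega
      have e5 : (a:ℂ) + (b:ℂ) * zeta ∉ Abar5 := fun h => by
        have := (mem_Abar5_iff a b).1 h; omega
      have f6 : (a:ℂ) + (b:ℂ) * zeta ∉ A6 := fun h => by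
        have := (mem_A6_iff a b).1 h; omega
      have f4 : (a:ℂ) + (b:ℂ) * zeta ∉ A4 := fun h => by
        have := (mem_A4_iff a b).1 h; omega
      have f2 : (a:ℂ) + (b:ℂ) * zeta ∉ A2 := fun h => by
        have := (mem_A2_iff a b).1 h; omega
      rw [phi, psi, Set.indicator_of_mem e1, Set.indicator_of_notMem e3,
        Set.indicator_of_notMem e5, Set.indicator_of_notMem f6,
        Set.indicator_of_notMem f4, Set.indicator_of_notMem f2]
      simpa using hw
    · rcases le_or_gt a b with hab | hab
      · -- z ∈ Ā₃
        have e1 : (a:ℂ) + (b:ℂ) * zeta ∉ Abar1 := fun h => by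
          have := (mem_Abar1_iff a b).1 h; omega
        have e3 : (a:ℂ) + (b:ℂ) * zeta ∈ Abar3 := (mem_Abar3_iff a b).2 ⟨hab, hb⟩
        have e5 : (a:ℂ) + (b:ℂ) * zeta ∉ Abar5 := fun h => by
          have := (mem_Abar5_iff a b).1 h; omega
        have f6 : (a:ℂ) + (b:ℂ) * zeta ∉ A6 := fun h => by
          have := (mem_A6_iff a b).1 h; omega
        have f4 : (a:ℂ) + (b:ℂ) * zeta ∉ A4 := fun h => by
          have := (mem_A4_iff a b).1 h; omega
        have f2 : (a:ℂ) + (b:ℂ) * zeta ∉ A2 := fun h => by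
          have := (mem_A2_iff a b).1 h; omega
        rw [phi, psi, Set.indicator_of_notMem e1, Set.indicator_of_mem e3,
          Set.indicator_of_notMem e5, Set.indicator_of_notMem f6,
          Set.indicator_of_notMem f4, Set.indicator_of_notMem f2]
        simpa using zeta_mul_mem hw
      · -- z ∈ A₂
        have e1 : (a:ℂ) + (b:ℂ) * zeta ∉ Abar1 := fun h => by
          have := (mem_Abar1_iff a b).1 h; omega
        have e3 : (a:ℂ) + (b:ℂ) * zeta ∉ Abar3 := fun h => by
          have := (mem_Abar3_iff a b).1 h; omega
        have e5 : (a:ℂ) + (b:ℂ) * zeta ∉ Abar5 := fun h => by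
          have := (mem_Abar5_iff a b).1 h; omega
        have f6 : (a:ℂ) + (b:ℂ) * zeta ∉ A6 := fun h => by
          have := (mem_A6_iff a b).1 h; omega
        have f4 : (a:ℂ) + (b:ℂ) * zeta ∉ A4 := fun h => by
          have := (mem_A4_iff a b).1 h; omega
        have f2 : (a:ℂ) + (b:ℂ) * zeta ∈ A2 := (mem_A2_iff a b).2 ⟨hab, by omega⟩
        rw [phi, psi, Set.indicator_of_notMem e1, Set.indicator_of_notMem e3,
          Set.indicator_of_notMem e5, Set.indicator_of_notMem f6,
          Set.indicator_of_notMem f4, Set.indicator_of_mem f2]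
        simpa using zeta_sq_mul_mem (conj_mem hw)
  · rcases le_or_gt a 0 with ha | ha
    · -- z ∈ A₄
      have e1 : (a:ℂ) + (b:ℂ) * zeta ∉ Abar1 := fun h => by
        have := (mem_Abar1_iff a b).1 h; omega
      have e3 : (a:ℂ) + (b:ℂ) * zeta ∉ Abar3 := fun h => by
        have := (mem_Abar3_iff a b).1 h; omega
      have e5 : (a:ℂ) + (b:ℂ) * zeta ∉ Abar5 := fun h => by
        have := (mem_Abar5_iff a b).1 h; omega
      have f6 : (a:ℂ) + (b:ℂ) * zeta ∉ A6 := fun h => by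
        have := (mem_A6_iff a b).1 h; omega
      have f4 : (a:ℂ) + (b:ℂ) * zeta ∈ A4 := (mem_A4_iff a b).2 ⟨ha, by omega⟩
      have f2 : (a:ℂ) + (b:ℂ) * zeta ∉ A2 := fun h => by
        have := (mem_A2_iff a b).1 h; omega
      rw [phi, psi, Set.indicator_of_notMem e1, Set.indicator_of_notMem e3,
        Set.indicator_of_notMem e5, Set.indicator_of_notMem f6,
        Set.indicator_of_mem f4, Set.indicator_of_notMem f2]
      simpa using zeta_mul_mem (conj_mem hw)
    · rcases le_or_gt a b with hab | hab
      · -- z ∈ Ā₅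
        have e1 : (a:ℂ) + (b:ℂ) * zeta ∉ Abar1 := fun h => by
          have := (mem_Abar1_iff a b).1 h; omega
        have e3 : (a:ℂ) + (b:ℂ) * zeta ∉ Abar3 := fun h => by
          have := (mem_Abar3_iff a b).1 h; omega
        have e5 : (a:ℂ) + (b:ℂ) * zeta ∈ Abar5 := (mem_Abar5_iff a b).2 ⟨by omega, hab⟩
        have f6 : (a:ℂ) + (b:ℂ) * zeta ∉ A6 := fun h => by
          have := (mem_A6_iff a b).1 h; omega
        have f4 : (a:ℂ) + (b:ℂ) * zeta ∉ A4 := fun h => by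
          have := (mem_A4_iff a b).1 h; omega
        have f2 : (a:ℂ) + (b:ℂ) * zeta ∉ A2 := fun h => by
          have := (mem_A2_iff a b).1 h; omega
        rw [phi, psi, Set.indicator_of_notMem e1, Set.indicator_of_notMem e3,
          Set.indicator_of_mem e5, Set.indicator_of_notMem f6,
          Set.indicator_of_notMem f4, Set.indicator_of_notMem f2]
        simpa using zeta_sq_mul_mem hw
      · -- z ∈ A₆
        have e1 : (a:ℂ) + (b:ℂ) * zeta ∉ Abar1 := fun h => by
          have := (mem_Abar1_iff a b).1 h; omega
        have e3 : (a:ℂ) + (b:ℂ) * zeta ∉ Abar3 := fun h => by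
          have := (mem_Abar3_iff a b).1 h; omega
        have e5 : (a:ℂ) + (b:ℂ) * zeta ∉ Abar5 := fun h => by
          have := (mem_Abar5_iff a b).1 h; omega
        have f6 : (a:ℂ) + (b:ℂ) * zeta ∈ A6 := (mem_A6_iff a b).2 ⟨by omega, hab⟩
        have f4 : (a:ℂ) + (b:ℂ) * zeta ∉ A4 := fun h => by
          have := (mem_A4_iff a b).1 h; omega
        have f2 : (a:ℂ) + (b:ℂ) * zeta ∉ A2 := fun h => by
          have := (mem_A2_iff a b).1 h; omega
        rw [phi, psi, Set.indicator_of_notMem e1, Set.indicator_of_notMem e3,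
          Set.indicator_of_notMem e5, Set.indicator_of_mem f6,
          Set.indicator_of_notMem f4, Set.indicator_of_notMem f2]
        simpa using conj_mem hw

lemma zero_mem_Zlat : (0:ℂ) ∈ Zlat := ⟨0, 0, by simp⟩

lemma Zlat_add {z w : ℂ} (hz : z ∈ Zlat) (hw : w ∈ Zlat) : z + w ∈ Zlat := by
  obtain ⟨a, b, rfl⟩ := hz
  obtain ⟨c, d, rfl⟩ := hw
  exact ⟨a + c, b + d, by push_cast; ring⟩

lemma steps_subset_Zlat : steps ⊆ Zlat := by
  rintro w (rfl | rfl | rfl)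
  · exact ⟨1, 0, by simp⟩
  · exact ⟨0, 1, by simp⟩
  · exact ⟨-1, -1, by rw [zeta_sq]; push_cast; ring⟩

lemma countable_Zlat : Zlat.Countable := by
  have h : Zlat ⊆ Set.range (fun p : ℤ × ℤ => ((p.1 : ℂ) + (p.2 : ℂ) * zeta)) := by
    rintro z ⟨a, b, rfl⟩; exact ⟨(a, b), rfl⟩
  exact (Set.countable_range _).mono h

lemma measurableSet_Abar1 : MeasurableSet Abar1 := by
  have h : Abar1.Countable := by
    apply countable_Zlat.mono
    intro z hz
    have := (mem_Abar1_iff 0 0)  -- dummy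
    rcases hz with (((⟨k1, k2, rfl, _, _⟩ | ⟨n, rfl, _⟩) | ⟨n, rfl, _⟩) | hz)
    · exact ⟨k1 - k2, -k2, by rw [zeta_sq]; push_cast; ring⟩
    · exact ⟨n, 0, by push_cast; ring⟩
    · exact ⟨1, n, by push_cast; ring⟩
    · exact ⟨1, 0, by rw [hz]; push_cast; ring⟩
  exact h.measurableSet

lemma measurableSet_Abar3 : MeasurableSet Abar3 := by
  have h : Abar3.Countable := by
    apply countable_Zlat.mono
    intro z hz
    rcases hz with (((⟨k1, k2, rfl, _, _⟩ | ⟨n, rfl, _⟩) | ⟨n, rfl, _⟩) | hz)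
    · exact ⟨-k1, -k2, by push_cast; ring⟩
    · exact ⟨-n, -n, by rw [zeta_sq]; push_cast; ring⟩
    · exact ⟨n, 0, by push_cast; ring⟩
    · exact ⟨0, 0, by rw [hz]; push_cast; ring⟩
  exact h.measurableSet

lemma measurableSet_Abar5 : MeasurableSet Abar5 := by
  have h : Abar5.Countable := by
    apply countable_Zlat.mono
    intro z hz
    rcases hz with (((⟨k1, k2, rfl, _, _⟩ | ⟨n, rfl, _⟩) | ⟨n, rfl, _⟩) | hz)
    · exact ⟨k1 - k2, k1, by rw [zeta_sq]; push_cast; ring⟩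
    · exact ⟨1, n + 1, by rw [zeta_sq]; push_cast; ring⟩
    · exact ⟨-n, -n, by rw [zeta_sq]; push_cast; ring⟩
    · exact ⟨1, 1, by rw [hz]; push_cast; ring⟩
  exact h.measurableSet

lemma measurableSet_A6 : MeasurableSet A6 := by
  have h : A6.Countable := by
    apply countable_Zlat.mono
    rintro z ⟨k1, k2, rfl, _, _⟩
    exact ⟨k1, k2, by push_cast; ring⟩
  exact h.measurableSet

lemma measurableSet_A4 : MeasurableSet A4 := by
  have h : A4.Countable := by
    apply countable_Zlat.mono
    rintro z ⟨k1, k2, rfl, _, _⟩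
    exact ⟨-k2, k1 - k2, by rw [zeta_sq]; push_cast; ring⟩
  exact h.measurableSet

lemma measurableSet_A2 : MeasurableSet A2 := by
  have h : A2.Countable := by
    apply countable_Zlat.mono
    rintro z ⟨k1, k2, rfl, _, _⟩
    exact ⟨-k2, -k1, by push_cast; ring⟩
  exact h.measurableSet

lemma measurable_phi : Measurable phi := by
  unfold phi
  exact ((measurable_one.indicator measurableSet_Abar1).add
    ((measurable_one.indicator measurableSet_Abar3).const_mul zeta)).add
    ((measurable_one.indicator measurableSet_Abar5).const_mul (zeta ^ 2))

lemma measurable_psi : Measurable psi := by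
  unfold psi
  exact ((measurable_one.indicator measurableSet_A6).add
    ((measurable_one.indicator measurableSet_A4).const_mul zeta)).add
    ((measurable_one.indicator measurableSet_A2).const_mul (zeta ^ 2))

lemma norm_zeta : ‖zeta‖ = 1 := by
  have h : ‖zeta‖ ^ 3 = 1 := by rw [← norm_pow, zeta_cube, norm_one]
  nlinarith [norm_nonneg zeta, h, sq_nonneg (‖zeta‖ - 1), sq_nonneg (‖zeta‖ + 1)]

lemma norm_indicator_one_le (s : Set ℂ) (z : ℂ) : ‖s.indicator (1 : ℂ → ℂ) z‖ ≤ 1 := by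
  by_cases h : z ∈ s <;> simp [Set.indicator_apply, h]

lemma norm_phi_le (z : ℂ) : ‖phi z‖ ≤ 3 := by
  unfold phi
  have h1 := norm_indicator_one_le Abar1 z
  have h3 := norm_indicator_one_le Abar3 z
  have h5 := norm_indicator_one_le Abar5 z
  calc ‖Abar1.indicator 1 z + zeta * Abar3.indicator 1 z + zeta ^ 2 * Abar5.indicator 1 z‖
      ≤ ‖Abar1.indicator 1 z + zeta * Abar3.indicator 1 z‖ + ‖zeta ^ 2 * Abar5.indicator 1 z‖ :=
        norm_add_le _ _
    _ ≤ ‖Abar1.indicator 1 z‖ + ‖zeta * Abar3.indicator 1 z‖ + ‖zeta ^ 2 * Abar5.indicator 1 z‖ := by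
        have := norm_add_le (Abar1.indicator 1 z) (zeta * Abar3.indicator 1 z)
        linarith
    _ ≤ 3 := by
        rw [norm_mul, norm_mul, norm_pow, norm_zeta]
        simp only [one_pow, one_mul]
        linarith

lemma norm_psi_le (z : ℂ) : ‖psi z‖ ≤ 3 := by
  unfold psi
  have h1 := norm_indicator_one_le A6 z
  have h3 := norm_indicator_one_le A4 z
  have h5 := norm_indicator_one_le A2 z
  calc ‖A6.indicator 1 z + zeta * A4.indicator 1 z + zeta ^ 2 * A2.indicator 1 z‖
      ≤ ‖A6.indicator 1 z + zeta * A4.indicator 1 z‖ + ‖zeta ^ 2 * A2.indicator 1 z‖ :=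
        norm_add_le _ _
    _ ≤ ‖A6.indicator 1 z‖ + ‖zeta * A4.indicator 1 z‖ + ‖zeta ^ 2 * A2.indicator 1 z‖ := by
        have := norm_add_le (A6.indicator 1 z) (zeta * A4.indicator 1 z)
        linarith
    _ ≤ 3 := by
        rw [norm_mul, norm_mul, norm_pow, norm_zeta]
        simp only [one_pow, one_mul]
        linarith

lemma integrable_conj_comp {Ω : Type*} {mΩ : MeasurableSpace Ω} {μ : Measure Ω} {f : Ω → ℂ}
    (hf : Integrable f μ) : Integrable (fun ω => (starRingEnd ℂ) (f ω)) μ := by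
  refine ⟨RCLike.continuous_conj.comp_aestronglyMeasurable hf.1, ?_⟩
  exact hf.2.congr' (Filter.Eventually.of_forall fun ω => (RCLike.norm_conj _).symm)

/-- The transformed walk `Z′_t = Σ_{s<t} (φ(Z_s)·ΔZ_s + ψ(Z_s)·Δ(conj Z)_s)`. -/
def transformedWalk {Ω : Type*} (Z : ℕ → Ω → ℂ) (t : ℕ) (ω : Ω) : ℂ :=
  ∑ s ∈ Finset.range t,
    (phi (Z s ω) * (Z (s + 1) ω - Z s ω) +
     psi (Z s ω) * (starRingEnd ℂ (Z (s + 1) ω) - starRingEnd ℂ (Z s ω)))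

/-- If `Z` is a Parisian walk, then `Z′ = Σ (φ ΔZ + ψ Δconj Z)` is again a Parisian
walk: an adapted, integrable martingale starting in `ℤ[ζ]` whose increments lie in
`{1, ζ, ζ²}` almost surely. -/
theorem transformedWalk_isParisian
    {Ω : Type*} {mΩ : MeasurableSpace Ω} (μ : Measure Ω) [IsProbabilityMeasure μ]
    (ℱ : Filtration ℕ mΩ) (Z : ℕ → Ω → ℂ) (hZ : IsParisian μ ℱ Z) :
    IsParisian μ ℱ (transformedWalk Z) := by
  obtain ⟨hmart, hlat0, hstep⟩ := hZ
  have hadZ : StronglyAdapted ℱ Z := hmart.stronglyAdapted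
  have hintZ : ∀ n, Integrable (Z n) μ := hmart.integrable
  -- increment functions
  set D : ℕ → Ω → ℂ := fun n ω =>
    phi (Z n ω) * (Z (n + 1) ω - Z n ω) +
      psi (Z n ω) * (starRingEnd ℂ (Z (n + 1) ω) - starRingEnd ℂ (Z n ω)) with hDdef
  have hTW : ∀ t, transformedWalk Z t = fun ω => ∑ s ∈ Finset.range t, D s ω := fun t => rfl
  -- a.e. lattice membership
  have hlat : ∀ t, ∀ᵐ ω ∂μ, Z t ω ∈ Zlat := by
    intro t
    induction t with
    | zero => exact hlat0
    | succ n ih =>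
      filter_upwards [ih, hstep n] with ω h1 h2
      have := Zlat_add h1 (steps_subset_Zlat h2)
      simpa using this
  -- measurability
  have hphiZ : ∀ n, StronglyMeasurable[ℱ n] fun ω => phi (Z n ω) := fun n =>
    (measurable_phi.comp (hadZ n).measurable).stronglyMeasurable
  have hpsiZ : ∀ n, StronglyMeasurable[ℱ n] fun ω => psi (Z n ω) := fun n =>
    (measurable_psi.comp (hadZ n).measurable).stronglyMeasurable
  have hconjZ : ∀ n, StronglyMeasurable[ℱ n] fun ω => (starRingEnd ℂ) (Z n ω) := fun n =>
    RCLike.continuous_conj.comp_stronglyMeasurable (hadZ n)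
  have hDadp : ∀ n, StronglyMeasurable[ℱ (n + 1)] (D n) := by
    intro n
    apply StronglyMeasurable.add
    · exact ((hphiZ n).mono (ℱ.mono n.le_succ)).mul
        ((hadZ (n + 1)).sub ((hadZ n).mono (ℱ.mono n.le_succ)))
    · exact ((hpsiZ n).mono (ℱ.mono n.le_succ)).mul
        ((hconjZ (n + 1)).sub ((hconjZ n).mono (ℱ.mono n.le_succ)))
  have hadp : StronglyAdapted ℱ (transformedWalk Z) := by
    intro t
    rw [hTW t]
    refine Finset.stronglyMeasurable_fun_sum _ fun s hs => ?_
    exact (hDadp s).mono (ℱ.mono (Finset.mem_range.mp hs))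
  -- integrability
  have hg1int : ∀ n, Integrable (fun ω => Z (n + 1) ω - Z n ω) μ := fun n =>
    (hintZ (n + 1)).sub (hintZ n)
  have hg2int : ∀ n,
      Integrable (fun ω => (starRingEnd ℂ) (Z (n + 1) ω) - (starRingEnd ℂ) (Z n ω)) μ := fun n =>
    (integrable_conj_comp (hintZ (n + 1))).sub (integrable_conj_comp (hintZ n))
  have hDint : ∀ n, Integrable (D n) μ := by
    intro n
    apply Integrable.add
    · exact (hg1int n).bdd_mul ((hphiZ n).mono (ℱ.le n)).aestronglyMeasurable
        (Filter.Eventually.of_forall fun ω => norm_phi_le _)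
    · exact (hg2int n).bdd_mul ((hpsiZ n).mono (ℱ.le n)).aestronglyMeasurable
        (Filter.Eventually.of_forall fun ω => norm_psi_le _)
  have hTWint : ∀ t, Integrable (transformedWalk Z t) μ := by
    intro t
    rw [hTW t]
    exact integrable_finset_sum _ fun s _ => hDint s
  -- conditional expectations of increments of Z vanish
  have hΔ : ∀ n, μ[fun ω => Z (n + 1) ω - Z n ω|ℱ n] =ᵐ[μ] 0 := by
    intro n
    have h1 : μ[fun ω => Z (n + 1) ω - Z n ω|ℱ n] =ᵐ[μ] μ[Z (n + 1)|ℱ n] - μ[Z n|ℱ n] :=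
      condExp_sub (hintZ (n + 1)) (hintZ n) (ℱ n)
    have h2 := hmart.2 n (n + 1) (Nat.le_succ n)
    have h3 : μ[Z n|ℱ n] = Z n :=
      condExp_of_stronglyMeasurable (ℱ.le n) (hadZ n) (hintZ n)
    refine h1.trans ?_
    rw [h3]
    filter_upwards [h2] with ω hω
    simp [hω]
  have hΔc : ∀ n,
      μ[fun ω => (starRingEnd ℂ) (Z (n + 1) ω) - (starRingEnd ℂ) (Z n ω)|ℱ n] =ᵐ[μ] 0 := by
    intro n
    have key : (fun _ => (0 : ℂ)) =ᵐ[μ]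
        μ[fun ω => (starRingEnd ℂ) (Z (n + 1) ω) - (starRingEnd ℂ) (Z n ω)|ℱ n] := by
      refine ae_eq_condExp_of_forall_setIntegral_eq (ℱ.le n) (hg2int n) ?_ ?_ ?_
      · intro s _ _
        exact (integrable_const (0 : ℂ)).integrableOn
      · intro s hs _
        have e1 : ∫ ω in s, (Z (n + 1) ω - Z n ω) ∂μ = 0 := by
          rw [← setIntegral_condExp (ℱ.le n) (hg1int n) hs]
          rw [setIntegral_congr_ae (ℱ.le n s hs) ((hΔ n).mono fun ω h _ => h)]
          simp
        have e2 : ∫ ω in s, ((starRingEnd ℂ) (Z (n + 1) ω) - (starRingEnd ℂ) (Z n ω)) ∂μ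
            = (starRingEnd ℂ) (∫ ω in s, (Z (n + 1) ω - Z n ω) ∂μ) := by
          rw [← integral_conj]
          apply integral_congr_ae
          exact Filter.Eventually.of_forall fun ω => by simp [map_sub]
        rw [e2, e1, map_zero]
        simp
      · exact (stronglyMeasurable_const :
          StronglyMeasurable[ℱ n] fun _ : Ω => (0 : ℂ)).aestronglyMeasurable
    exact key.symm
  -- conditional expectation of D n vanishes
  have hDce : ∀ n, μ[D n|ℱ n] =ᵐ[μ] 0 := by
    intro n
    set g1 : Ω → ℂ := fun ω => Z (n + 1) ω - Z n ω with hg1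
    set g2 : Ω → ℂ := fun ω => (starRingEnd ℂ) (Z (n + 1) ω) - (starRingEnd ℂ) (Z n ω) with hg2
    set E1 : Set Ω := Z n ⁻¹' Abar1 with hE1def
    set E3 : Set Ω := Z n ⁻¹' Abar3 with hE3def
    set E5 : Set Ω := Z n ⁻¹' Abar5 with hE5def
    set F6 : Set Ω := Z n ⁻¹' A6 with hF6def
    set F4 : Set Ω := Z n ⁻¹' A4 with hF4def
    set F2 : Set Ω := Z n ⁻¹' A2 with hF2def
    have hE1 : MeasurableSet[ℱ n] E1 := (hadZ n).measurable measurableSet_Abar1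
    have hE3 : MeasurableSet[ℱ n] E3 := (hadZ n).measurable measurableSet_Abar3
    have hE5 : MeasurableSet[ℱ n] E5 := (hadZ n).measurable measurableSet_Abar5
    have hF6 : MeasurableSet[ℱ n] F6 := (hadZ n).measurable measurableSet_A6
    have hF4 : MeasurableSet[ℱ n] F4 := (hadZ n).measurable measurableSet_A4
    have hF2 : MeasurableSet[ℱ n] F2 := (hadZ n).measurable measurableSet_A2
    have hsplit : D n = E1.indicator g1 + zeta • E3.indicator g1 + zeta ^ 2 • E5.indicator g1
        + F6.indicator g2 + zeta • F4.indicator g2 + zeta ^ 2 • F2.indicator g2 := by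
      funext ω
      simp only [hDdef, phi, psi, Pi.add_apply, Pi.smul_apply, smul_eq_mul,
        Set.indicator_apply, Set.mem_preimage, Pi.one_apply, hE1def, hE3def, hE5def,
        hF6def, hF4def, hF2def, hg1, hg2]
      split_ifs <;> ring
    -- integrability of the pieces
    have i1 : Integrable (E1.indicator g1) μ := (hg1int n).indicator (ℱ.le n _ hE1)
    have i3 : Integrable (E3.indicator g1) μ := (hg1int n).indicator (ℱ.le n _ hE3)
    have i5 : Integrable (E5.indicator g1) μ := (hg1int n).indicator (ℱ.le n _ hE5)
    have j6 : Integrable (F6.indicator g2) μ := (hg2int n).indicator (ℱ.le n _ hF6)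
    have j4 : Integrable (F4.indicator g2) μ := (hg2int n).indicator (ℱ.le n _ hF4)
    have j2 : Integrable (F2.indicator g2) μ := (hg2int n).indicator (ℱ.le n _ hF2)
    -- conditional expectations of the pieces vanish
    have hind : ∀ (E : Set Ω), MeasurableSet[ℱ n] E → ∀ (g : Ω → ℂ), Integrable g μ →
        μ[g|ℱ n] =ᵐ[μ] 0 → μ[E.indicator g|ℱ n] =ᵐ[μ] 0 := by
      intro E hE g hgint hg0
      refine (condExp_indicator hgint hE).trans ?_
      filter_upwards [hg0] with ω hω
      by_cases h : ω ∈ E <;> simp [Set.indicator_apply, h, hω]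
    have z1 : μ[E1.indicator g1|ℱ n] =ᵐ[μ] 0 := hind E1 hE1 g1 (hg1int n) (hΔ n)
    have z3' : μ[E3.indicator g1|ℱ n] =ᵐ[μ] 0 := hind E3 hE3 g1 (hg1int n) (hΔ n)
    have z5' : μ[E5.indicator g1|ℱ n] =ᵐ[μ] 0 := hind E5 hE5 g1 (hg1int n) (hΔ n)
    have y6 : μ[F6.indicator g2|ℱ n] =ᵐ[μ] 0 := hind F6 hF6 g2 (hg2int n) (hΔc n)
    have y4' : μ[F4.indicator g2|ℱ n] =ᵐ[μ] 0 := hind F4 hF4 g2 (hg2int n) (hΔc n)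
    have y2' : μ[F2.indicator g2|ℱ n] =ᵐ[μ] 0 := hind F2 hF2 g2 (hg2int n) (hΔc n)
    have z3 : μ[zeta • E3.indicator g1|ℱ n] =ᵐ[μ] 0 := by
      refine (condExp_smul zeta (E3.indicator g1) (ℱ n)).trans ?_
      filter_upwards [z3'] with ω hω
      simp [hω]
    have z5 : μ[zeta ^ 2 • E5.indicator g1|ℱ n] =ᵐ[μ] 0 := by
      refine (condExp_smul (zeta ^ 2) (E5.indicator g1) (ℱ n)).trans ?_
      filter_upwards [z5'] with ω hω
      simp [hω]
    have y4 : μ[zeta • F4.indicator g2|ℱ n] =ᵐ[μ] 0 := by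
      refine (condExp_smul zeta (F4.indicator g2) (ℱ n)).trans ?_
      filter_upwards [y4'] with ω hω
      simp [hω]
    have y2 : μ[zeta ^ 2 • F2.indicator g2|ℱ n] =ᵐ[μ] 0 := by
      refine (condExp_smul (zeta ^ 2) (F2.indicator g2) (ℱ n)).trans ?_
      filter_upwards [y2'] with ω hω
      simp [hω]
    have i3s : Integrable (zeta • E3.indicator g1) μ := i3.smul zeta
    have i5s : Integrable (zeta ^ 2 • E5.indicator g1) μ := i5.smul (zeta ^ 2)
    have j4s : Integrable (zeta • F4.indicator g2) μ := j4.smul zeta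
    have j2s : Integrable (zeta ^ 2 • F2.indicator g2) μ := j2.smul (zeta ^ 2)
    rw [hsplit]
    have e2 := condExp_add (m := ℱ n) i1 i3s
    have e3 := condExp_add (m := ℱ n) (i1.add i3s) i5s
    have e4 := condExp_add (m := ℱ n) ((i1.add i3s).add i5s) j6
    have e5 := condExp_add (m := ℱ n) (((i1.add i3s).add i5s).add j6) j4s
    have e6 := condExp_add (m := ℱ n) ((((i1.add i3s).add i5s).add j6).add j4s) j2s
    filter_upwards [e2, e3, e4, e5, e6, z1, z3, z5, y6, y4, y2] with ω w2 w3 w4 w5 w6 a1 a3 a5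
      b6 b4 b2
    simp only [Pi.add_apply, Pi.zero_apply] at *
    rw [w6, w5, w4, w3, w2, a1, a3, a5, b6, b4, b2]
    ring
  -- one-step martingale property
  have hstep' : ∀ n, μ[transformedWalk Z (n + 1)|ℱ n] =ᵐ[μ] transformedWalk Z n := by
    intro n
    have hsucc : transformedWalk Z (n + 1) = transformedWalk Z n + D n := by
      funext ω
      exact Finset.sum_range_succ _ n
    rw [hsucc]
    refine (condExp_add (hTWint n) (hDint n) (ℱ n)).trans ?_
    rw [condExp_of_stronglyMeasurable (ℱ.le n) (hadp n) (hTWint n)]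
    filter_upwards [hDce n] with ω hω
    simp only [Pi.add_apply, Pi.zero_apply] at *
    rw [hω, add_zero]
  -- full martingale property by the tower rule
  have hMart : Martingale (transformedWalk Z) ℱ μ := by
    refine ⟨hadp, fun i j hij => ?_⟩
    obtain ⟨k, rfl⟩ := Nat.exists_eq_add_of_le hij
    clear hij
    induction k with
    | zero =>
      rw [condExp_of_stronglyMeasurable (ℱ.le i) (hadp (i + 0)) (hTWint (i + 0))]
      exact Filter.EventuallyEq.rfl
    | succ k ih =>
      have h1 : μ[transformedWalk Z (i + k + 1)|ℱ i]
          =ᵐ[μ] μ[μ[transformedWalk Z (i + k + 1)|ℱ (i + k)]|ℱ i] :=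
        (condExp_condExp_of_le (ℱ.mono (Nat.le_add_right i k)) (ℱ.le (i + k))).symm
      exact h1.trans ((condExp_congr_ae (hstep' (i + k))).trans ih)
  refine ⟨hMart, ?_, ?_⟩
  · refine Filter.Eventually.of_forall fun ω => ?_
    have h0 : transformedWalk Z 0 ω = 0 := by simp [transformedWalk]
    rw [h0]
    exact zero_mem_Zlat
  · intro t
    filter_upwards [hlat t, hstep t] with ω h1 h2
    have hdiff : transformedWalk Z (t + 1) ω - transformedWalk Z t ω = D t ω := by
      simp [transformedWalk, Finset.sum_range_succ]; rfl
    rw [hdiff]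
    have hrw : (starRingEnd ℂ) (Z (t + 1) ω) - (starRingEnd ℂ) (Z t ω)
        = (starRingEnd ℂ) (Z (t + 1) ω - Z t ω) := (map_sub _ _ _).symm
    show phi (Z t ω) * (Z (t + 1) ω - Z t ω) +
      psi (Z t ω) * ((starRingEnd ℂ) (Z (t + 1) ω) - (starRingEnd ℂ) (Z t ω)) ∈ steps
    rw [hrw]
    exact phi_psi_step h1 h2

end Parisian
end
end

section
/- If Z′ is a Parisian walk, then the real-valued process X_t := (2/3)·Re( (1 − ζ²)·Z′_t ) is a simple walk: X_0 ∈ ℤ almost surely (indeed if Z′_t = a + bζ with a, b ∈ ℤ then X_t = a − b), X is a martingale, and for every t the conditional distribution of X_{t+1} − X_t given ℱ_t is uniform on {−1, 0, 1}. -/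
open MeasureTheory Complex
open scoped Classical

noncomputable section

namespace Parisian


lemma zeta_eq' : zeta = (↑(-(1:ℝ)/2) : ℂ) + (↑(Real.sqrt 3/2) : ℝ) * Complex.I := by
  rw [zeta]; push_cast; ring

lemma zeta_re : zeta.re = -(1/2) := by rw [zeta_eq']; simp; ring
lemma zeta_im : zeta.im = Real.sqrt 3 / 2 := by rw [zeta_eq']; simp

lemma sqrt3_pos : (0:ℝ) < Real.sqrt 3 := Real.sqrt_pos.mpr (by norm_num)

lemma zeta_ne_one : zeta ≠ 1 := by
  intro h; have := congrArg Complex.im h; rw [zeta_im] at this; simp at this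

lemma zeta_sq_ne_one : zeta ^ 2 ≠ 1 := by
  rw [zeta_sq]; intro h
  have h2 : zeta = -2 := by linear_combination -h
  have := congrArg Complex.im h2; rw [zeta_im] at this; simp at this

lemma zeta_ne_neg_one : zeta ≠ -1 := by
  intro h; have := congrArg Complex.im h; rw [zeta_im] at this; simp at this

lemma zeta_ne_zero : zeta ≠ 0 := by
  intro h; have := congrArg Complex.im h; rw [zeta_im] at this; simp at this

lemma zeta_ne_zeta_sq : zeta ≠ zeta ^ 2 := by
  rw [zeta_sq]; intro h
  have h2 : (2:ℂ) * zeta = -1 := by linear_combination h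
  have := congrArg Complex.im h2
  simp [zeta_im] at this

lemma key (a b : ℝ) : (2 / 3 : ℝ) * ((1 - zeta ^ 2) * ((a : ℂ) + (b : ℂ) * zeta)).re = a - b := by
  have h : (1 - zeta^2) * ((a:ℂ) + (b:ℂ)*zeta) = ((2*a - b : ℝ):ℂ) + ((a + b : ℝ):ℂ) * zeta := by
    push_cast; linear_combination ((b:ℂ) - a - b*zeta) * zeta_sq
  rw [h]
  simp [Complex.add_re, Complex.re_ofReal_mul, zeta_re]
  ring

lemma condexp_clm {Ω : Type*} {m mΩ : MeasurableSpace Ω} (hm : m ≤ mΩ)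
    {μ : Measure Ω} [IsFiniteMeasure μ]
    {E F : Type*} [NormedAddCommGroup E] [NormedSpace ℝ E] [CompleteSpace E]
    [NormedAddCommGroup F] [NormedSpace ℝ F] [CompleteSpace F]
    (L : E →L[ℝ] F) {f : Ω → E} (hf : Integrable f μ) :
    (fun ω => L ((μ[f|m]) ω)) =ᵐ[μ] μ[fun ω => L (f ω)|m] := by
  refine ae_eq_condExp_of_forall_setIntegral_eq hm (L.integrable_comp hf) ?_ ?_ ?_
  · intro s _ _
    exact (L.integrable_comp integrable_condExp).integrableOn
  · intro s hs hμs
    rw [L.integral_comp_comm integrable_condExp.integrableOn,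
      setIntegral_condExp hm hf hs, L.integral_comp_comm hf.integrableOn]
  · exact (L.continuous.comp_stronglyMeasurable stronglyMeasurable_condExp).aestronglyMeasurable

/-- The continuous real-linear map `z ↦ (2/3)·Re((1−ζ²)z)`. -/
def Lmap : ℂ →L[ℝ] ℝ :=
  (2/3 : ℝ) • (Complex.reCLM.comp (((ContinuousLinearMap.mul ℂ ℂ) (1 - zeta^2)).restrictScalars ℝ))

lemma Lmap_apply (z : ℂ) : Lmap z = (2/3 : ℝ) * ((1 - zeta^2) * z).re := rfl

/-- If `Z′` is a Parisian walk then `X_t = (2/3)·Re((1 − ζ²)·Z′_t)` is a simple walk: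
`X₀ ∈ ℤ` a.s. (indeed `(2/3)·Re((1−ζ²)(a+bζ)) = a − b` for `a, b ∈ ℤ`), `X` is a
martingale, and the conditional distribution of each increment given `ℱ_t` is
uniform on `{−1, 0, 1}`. -/
theorem re_of_parisian_is_simple_walk
    {Ω : Type*} {mΩ : MeasurableSpace Ω} (μ : Measure Ω) [IsProbabilityMeasure μ]
    (ℱ : Filtration ℕ mΩ) (Z' : ℕ → Ω → ℂ) (hZ' : IsParisian μ ℱ Z')
    (X : ℕ → Ω → ℝ) (hX : ∀ t ω, X t ω = (2 / 3) * ((1 - zeta ^ 2) * Z' t ω).re) :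
    (∀ a b : ℤ, (2 / 3 : ℝ) * ((1 - zeta ^ 2) * ((a : ℂ) + (b : ℂ) * zeta)).re
      = (a : ℝ) - (b : ℝ)) ∧
    (∀ᵐ ω ∂μ, ∃ n : ℤ, X 0 ω = (n : ℝ)) ∧
    Martingale X ℱ μ ∧
    ∀ t : ℕ, ∀ c ∈ ({-1, 0, 1} : Set ℝ),
      μ[Set.indicator {ω | X (t + 1) ω - X t ω = c} (fun _ => (1 : ℝ)) | ℱ t]
        =ᵐ[μ] fun _ => 1 / 3 := by
  obtain ⟨hmart, hstart, hsteps⟩ := hZ'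
  refine ⟨fun a b => key a b, ?_, ?_, ?_⟩
  · -- X 0 ∈ ℤ a.s.
    filter_upwards [hstart] with ω hω
    obtain ⟨a, b, hab⟩ := hω
    refine ⟨a - b, ?_⟩
    have hk := key (a:ℝ) (b:ℝ)
    rw [hX, hab]
    push_cast at hk ⊢
    exact hk
  · -- X is a martingale
    have hXL : ∀ n, X n = fun ω => Lmap (Z' n ω) := by
      intro n; funext ω; rw [hX, Lmap_apply]
    refine ⟨fun n => ?_, fun i j hij => ?_⟩
    · rw [hXL n]
      exact Lmap.continuous.comp_stronglyMeasurable (hmart.stronglyAdapted n)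
    · have h1 : (fun ω => Lmap ((μ[Z' j|ℱ i]) ω)) =ᵐ[μ] μ[fun ω => Lmap (Z' j ω)|ℱ i] :=
        condexp_clm (ℱ.le i) Lmap (hmart.integrable j)
      rw [hXL j, hXL i]
      refine h1.symm.trans ?_
      filter_upwards [hmart.condExp_ae_eq hij] with ω hω
      exact congrArg Lmap hω
  · -- conditional increment distribution
    intro t c hc
    have hm : ℱ t ≤ mΩ := ℱ.le t
    set D : Ω → ℂ := fun ω => Z' (t+1) ω - Z' t ω with hD_def
    have hDsm : StronglyMeasurable D :=
      ((hmart.stronglyAdapted (t+1)).mono (ℱ.le (t+1))).sub ((hmart.stronglyAdapted t).mono (ℱ.le t))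
    have hDint : Integrable D μ := (hmart.integrable (t+1)).sub (hmart.integrable t)
    have hSmeas : ∀ s : ℂ, MeasurableSet (D ⁻¹' {s}) :=
      fun s => hDsm.measurable (measurableSet_singleton s)
    set g : ℂ → Ω → ℝ := fun s => Set.indicator (D ⁻¹' {s}) (fun _ => (1:ℝ)) with hg_def
    have hgint : ∀ s, Integrable (g s) μ := fun s => (integrable_const (1:ℝ)).indicator (hSmeas s)
    have hst : ∀ᵐ ω ∂μ, D ω = 1 ∨ D ω = zeta ∨ D ω = zeta^2 := by
      filter_upwards [hsteps t] with ω hω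
      simpa [steps, Set.mem_insert_iff, Set.mem_singleton_iff] using hω
    have hne1z : (1:ℂ) ≠ zeta := Ne.symm zeta_ne_one
    have hne1z2 : (1:ℂ) ≠ zeta^2 := Ne.symm zeta_sq_ne_one
    have hnezz2 : zeta ≠ zeta^2 := zeta_ne_zeta_sq
    have hz2re : (zeta^2).re = -(1/2) := by rw [zeta_sq]; simp [zeta_re]; norm_num
    have hz2im : (zeta^2).im = -(Real.sqrt 3/2) := by rw [zeta_sq]; simp [zeta_im]
    -- pointwise equations
    have hA : g 1 + g zeta + g (zeta^2) =ᵐ[μ] fun _ => (1:ℝ) := by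
      filter_upwards [hst] with ω hω
      rcases hω with h|h|h <;>
        simp [hg_def, Set.indicator_apply, h, hne1z, hne1z2, hnezz2,
          zeta_ne_one, zeta_sq_ne_one, Ne.symm hnezz2, zeta_ne_neg_one, zeta_ne_zero]
    have hBre : (fun ω => Complex.reCLM (D ω)) =ᵐ[μ]
        g 1 - (1/2:ℝ) • g zeta - (1/2:ℝ) • g (zeta^2) := by
      filter_upwards [hst] with ω hω
      rcases hω with h|h|h <;>
        simp [hg_def, Set.indicator_apply, h, hne1z, hne1z2, hnezz2,
          zeta_ne_one, zeta_sq_ne_one, Ne.symm hnezz2, zeta_ne_neg_one, zeta_ne_zero, zeta_re, hz2re] <;> norm_num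
    have hBim : (fun ω => Complex.imCLM (D ω)) =ᵐ[μ]
        (Real.sqrt 3/2 : ℝ) • g zeta - (Real.sqrt 3/2 : ℝ) • g (zeta^2) := by
      filter_upwards [hst] with ω hω
      rcases hω with h|h|h <;>
        simp [hg_def, Set.indicator_apply, h, hne1z, hne1z2, hnezz2,
          zeta_ne_one, zeta_sq_ne_one, Ne.symm hnezz2, zeta_ne_neg_one, zeta_ne_zero, zeta_im, hz2im] <;> norm_num
    -- conditional expectation of D is 0
    have hcondD : μ[D|ℱ t] =ᵐ[μ] fun _ => (0:ℂ) := by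
      have h1 : μ[Z' (t+1)|ℱ t] =ᵐ[μ] Z' t := hmart.condExp_ae_eq (Nat.le_succ t)
      have h2 : μ[Z' t|ℱ t] = Z' t :=
        condExp_of_stronglyMeasurable hm (hmart.stronglyAdapted t) (hmart.integrable t)
      have h3 : μ[D|ℱ t] =ᵐ[μ] μ[Z' (t+1)|ℱ t] - μ[Z' t|ℱ t] :=
        condExp_sub (hmart.integrable (t+1)) (hmart.integrable t) _
      refine h3.trans ?_
      rw [h2]
      filter_upwards [h1] with ω hω
      simp [hω]
    have hre0 : μ[fun ω => Complex.reCLM (D ω)|ℱ t] =ᵐ[μ] fun _ => (0:ℝ) := by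
      refine (condexp_clm hm Complex.reCLM hDint).symm.trans ?_
      filter_upwards [hcondD] with ω hω
      simp [hω]
    have him0 : μ[fun ω => Complex.imCLM (D ω)|ℱ t] =ᵐ[μ] fun _ => (0:ℝ) := by
      refine (condexp_clm hm Complex.imCLM hDint).symm.trans ?_
      filter_upwards [hcondD] with ω hω
      simp [hω]
    set p : ℂ → Ω → ℝ := fun s => μ[g s|ℱ t] with hp_def
    -- equation 1: sum of p's is 1
    have e1 : ∀ᵐ ω ∂μ, p 1 ω + p zeta ω + p (zeta^2) ω = 1 := by
      have h1 : μ[g 1 + g zeta + g (zeta^2)|ℱ t] =ᵐ[μ] p 1 + p zeta + p (zeta^2) := by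
        refine (condExp_add ((hgint 1).add (hgint zeta)) (hgint (zeta^2)) _).trans ?_
        exact (condExp_add (hgint 1) (hgint zeta) _).add (Filter.EventuallyEq.refl _ _)
      have h2 : μ[g 1 + g zeta + g (zeta^2)|ℱ t] =ᵐ[μ] μ[fun _ => (1:ℝ)|ℱ t] :=
        condExp_congr_ae hA
      rw [condExp_const hm] at h2
      filter_upwards [h1.symm.trans h2] with ω hω
      simpa using hω
    -- equation 2: real part
    have e2 : ∀ᵐ ω ∂μ, p 1 ω - (1/2) * p zeta ω - (1/2) * p (zeta^2) ω = 0 := by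
      have h1 : μ[fun ω => Complex.reCLM (D ω)|ℱ t] =ᵐ[μ]
          p 1 - (1/2:ℝ) • p zeta - (1/2:ℝ) • p (zeta^2) := by
        refine (condExp_congr_ae hBre).trans ?_
        refine (condExp_sub ((hgint 1).sub ((hgint zeta).smul _)) ((hgint (zeta^2)).smul _) _).trans ?_
        refine Filter.EventuallyEq.sub ?_ (condExp_smul (μ := μ) (1/2:ℝ) (g (zeta^2)) _)
        refine (condExp_sub (hgint 1) ((hgint zeta).smul _) _).trans ?_
        exact (Filter.EventuallyEq.refl _ _).sub (condExp_smul (μ := μ) (1/2:ℝ) (g zeta) _)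
      filter_upwards [h1.symm.trans hre0] with ω hω
      simpa using hω
    -- equation 3: imaginary part
    have e3 : ∀ᵐ ω ∂μ, p zeta ω = p (zeta^2) ω := by
      have h1 : μ[fun ω => Complex.imCLM (D ω)|ℱ t] =ᵐ[μ]
          (Real.sqrt 3/2 : ℝ) • p zeta - (Real.sqrt 3/2 : ℝ) • p (zeta^2) := by
        refine (condExp_congr_ae hBim).trans ?_
        refine (condExp_sub ((hgint zeta).smul _) ((hgint (zeta^2)).smul _) _).trans ?_
        exact (condExp_smul (μ := μ) _ (g zeta) _).sub (condExp_smul (μ := μ) _ (g (zeta^2)) _)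
      filter_upwards [h1.symm.trans him0] with ω hω
      simp only [Pi.sub_apply, Pi.smul_apply, smul_eq_mul, Pi.zero_apply] at hω
      have h3 := sqrt3_pos
      nlinarith [hω]
    have hp3 : ∀ᵐ ω ∂μ, p 1 ω = 1/3 ∧ p zeta ω = 1/3 ∧ p (zeta^2) ω = 1/3 := by
      filter_upwards [e1, e2, e3] with ω h1 h2 h3
      refine ⟨by linarith, by linarith, by linarith⟩
    -- increments of X in terms of D
    have hXD : ∀ ω, X (t+1) ω - X t ω = (2/3:ℝ) * ((1 - zeta^2) * D ω).re := by
      intro ω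
      rw [hX, hX]
      have h : (1 - zeta^2) * D ω = (1 - zeta^2) * Z' (t+1) ω - (1 - zeta^2) * Z' t ω := by
        simp only [hD_def]; ring
      rw [h, Complex.sub_re]; ring
    have hval1 : (2/3:ℝ) * ((1 - zeta^2) * 1).re = 1 := by
      have h := key 1 0; push_cast at h; simpa using h
    have hvalz : (2/3:ℝ) * ((1 - zeta^2) * zeta).re = -1 := by
      have h := key 0 1; push_cast at h; simpa using h
    have hvalz2 : (2/3:ℝ) * ((1 - zeta^2) * (zeta^2)).re = 0 := by
      have h := key (-1) (-1)
      have h2 : ((-1:ℝ):ℂ) + ((-1:ℝ):ℂ) * zeta = zeta^2 := by rw [zeta_sq]; push_cast; ring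
      rw [h2] at h; simpa using h
    -- indicator sets agree a.e.
    have hindeq : ∀ (cc : ℝ) (s : ℂ), s ∈ steps →
        ((2/3:ℝ) * ((1 - zeta^2) * s).re = cc) →
        (∀ s', s' ∈ steps → s' ≠ s → (2/3:ℝ) * ((1 - zeta^2) * s').re ≠ cc) →
        Set.indicator {ω | X (t+1) ω - X t ω = cc} (fun _ => (1:ℝ)) =ᵐ[μ] g s := by
      intro cc s hs hval hnev
      filter_upwards [hst] with ω hω
      have hmem : (ω ∈ {ω | X (t+1) ω - X t ω = cc}) ↔ (ω ∈ D ⁻¹' {s}) := by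
        simp only [Set.mem_setOf_eq, Set.mem_preimage, Set.mem_singleton_iff, hXD]
        constructor
        · intro h
          by_contra hne'
          exact hnev (D ω) (by rcases hω with h'|h'|h' <;> rw [h'] <;>
            simp [steps, Set.mem_insert_iff, Set.mem_singleton_iff]) hne' h
        · intro h; rw [h]; exact hval
      simp only [hg_def, Set.indicator_apply]
      exact if_congr hmem rfl rfl
    have hfin : ∀ (cc : ℝ) (s : ℂ), s ∈ steps →
        ((2/3:ℝ) * ((1 - zeta^2) * s).re = cc) →
        (∀ s', s' ∈ steps → s' ≠ s → (2/3:ℝ) * ((1 - zeta^2) * s').re ≠ cc) →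
        (∀ᵐ ω ∂μ, p s ω = 1/3) →
        μ[Set.indicator {ω | X (t + 1) ω - X t ω = cc} (fun _ => (1:ℝ))|ℱ t]
          =ᵐ[μ] fun _ => (1/3 : ℝ) := by
      intro cc s hs hval hnev hps
      refine (condExp_congr_ae (hindeq cc s hs hval hnev)).trans ?_
      filter_upwards [hps] with ω hω
      exact hω
    have hsteps_mem1 : (1:ℂ) ∈ steps := by simp [steps]
    have hsteps_memz : zeta ∈ steps := by simp [steps]
    have hsteps_memz2 : zeta^2 ∈ steps := by simp [steps]
    have hcases : ∀ s', s' ∈ steps → s' = 1 ∨ s' = zeta ∨ s' = zeta^2 := by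
      intro s' hs'
      simpa [steps, Set.mem_insert_iff, Set.mem_singleton_iff] using hs'
    rcases hc with hc | hc | hc
    · -- c = -1, step ζ
      subst hc
      refine hfin _ zeta hsteps_memz hvalz ?_ (hp3.mono fun ω hω => hω.2.1)
      intro s' hs' hne'
      rcases hcases s' hs' with h|h|h <;> subst h
      · rw [hval1]; norm_num
      · exact absurd rfl hne'
      · rw [hvalz2]; norm_num
    · -- c = 0, step ζ²
      subst hc
      refine hfin _ (zeta^2) hsteps_memz2 hvalz2 ?_ (hp3.mono fun ω hω => hω.2.2)
      intro s' hs' hne'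
      rcases hcases s' hs' with h|h|h <;> subst h
      · rw [hval1]; norm_num
      · rw [hvalz]; norm_num
      · exact absurd rfl hne'
    · -- c = 1, step 1
      subst hc
      refine hfin _ 1 hsteps_mem1 hval1 ?_ (hp3.mono fun ω hω => hω.1)
      intro s' hs' hne'
      rcases hcases s' hs' with h|h|h <;> subst h
      · exact absurd rfl hne'
      · rw [hvalz]; norm_num
      · rw [hvalz2]; norm_num


end Parisian
end
end
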